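/- Let R be a left Noetherian ring with two-sided ideal I, and suppose the Rees algebra R* = ⊕_{n≥0} I^n is graded left Noetherian. Then for every finitely generated left R-module M there exists a submodule N ⊆ M such that N has no nonzero I-torsion elements and M/N is I-torsion. In fact one can take N = I^s M for s sufficiently large. -/

import Mathlib

def idealPow {R : Type*} [Ring R] (I : Ideal R) : ℕ → Ideal R
  | 0 => ⊤
  | n + 1 => Submodule.span R {x | ∃ a ∈ I, ∃ b ∈ idealPow I n, x = a * b}

namespace ReesTorsionAux

section Ring
variable {R : Type*} [Ring R] (I : Ideal R)

lemma ip_mul_right : ∀ (n : ℕ) (x : R), x ∈ idealPow I n → ∀ c : R, x * c ∈ idealPow I n := by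
  intro n
  induction n with
  | zero => intro x _ c; trivial
  | succ n ih =>
    intro x hx c
    refine Submodule.span_induction (p := fun y _ => y * c ∈ idealPow I (n + 1))
      ?_ ?_ ?_ ?_ hx
    · rintro y ⟨a, ha, b, hb, rfl⟩
      exact Submodule.subset_span ⟨a, ha, b * c, ih b hb c, mul_assoc a b c⟩
    · simpa using (idealPow I (n + 1)).zero_mem
    · intro y z _ _ hy hz
      simpa [add_mul] using (idealPow I (n + 1)).add_mem hy hz
    · intro r y _ hy
      simpa [smul_eq_mul, mul_assoc] using (idealPow I (n + 1)).smul_mem r hy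

lemma ip_succ_le (n : ℕ) : idealPow I (n + 1) ≤ idealPow I n := by
  induction n with
  | zero => exact le_top
  | succ n ih =>
    refine Submodule.span_le.mpr ?_
    rintro x ⟨a, ha, b, hb, rfl⟩
    exact Submodule.subset_span ⟨a, ha, b, ih hb, rfl⟩

lemma ip_antitone : Antitone (idealPow I) :=
  antitone_nat_of_succ_le (ip_succ_le I)

lemma ip_mul_mem : ∀ (m n : ℕ) (x y : R), x ∈ idealPow I m → y ∈ idealPow I n →
    x * y ∈ idealPow I (m + n) := by
  intro m
  induction m with
  | zero =>
    intro n x y _ hy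
    simpa [smul_eq_mul] using (idealPow I (0 + n)).smul_mem x (by rwa [Nat.zero_add])
  | succ m ih =>
    intro n x y hx hy
    refine Submodule.span_induction (p := fun z _ => z * y ∈ idealPow I (m + 1 + n))
      ?_ ?_ ?_ ?_ hx
    · rintro z ⟨a, ha, b, hb, rfl⟩
      have : a * (b * y) ∈ idealPow I (m + n + 1) :=
        Submodule.subset_span ⟨a, ha, b * y, ih n b y hb hy, rfl⟩
      rw [show m + 1 + n = m + n + 1 by omega]
      simpa [mul_assoc] using this
    · simpa using (idealPow I (m + 1 + n)).zero_mem
    · intro z w _ _ hz hw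
      simpa [add_mul] using (idealPow I (m + 1 + n)).add_mem hz hw
    · intro r z _ hz
      simpa [smul_eq_mul, mul_assoc] using (idealPow I (m + 1 + n)).smul_mem r hz


variable {M : Type*} [AddCommGroup M] [Module R M] (T : Submodule R M) (c : ℕ)

/-- The target submodule `D n = (I^(n-c)) T`. -/
def D (n : ℕ) : Submodule R M :=
  Submodule.span R {z : M | ∃ r ∈ idealPow I (n - c), ∃ t ∈ T, z = r • t}

lemma smul_D (i n' : ℕ) {r : R} (hr : r ∈ idealPow I i) {z : M} (hz : z ∈ D I T c n') :
    r • z ∈ D I T c (i + n') := by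
  refine Submodule.span_induction
    (p := fun z _ => ∀ r' ∈ idealPow I i, r' • z ∈ D I T c (i + n')) ?_ ?_ ?_ ?_ hz r hr
  · rintro z ⟨r'', hr'', t, ht, rfl⟩ r' hr'
    have hmem : r' * r'' ∈ idealPow I (i + n' - c) := by
      refine ip_antitone I (show i + n' - c ≤ i + (n' - c) by omega) ?_
      exact ip_mul_mem I i (n' - c) r' r'' hr' hr''
    exact Submodule.subset_span ⟨r' * r'', hmem, t, ht, smul_smul r' r'' t⟩
  · intro r' _; simpa using (D I T c (i + n')).zero_mem
  · intro x y _ _ hx hy r' hr'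
    simpa [smul_add] using (D I T c (i + n')).add_mem (hx r' hr') (hy r' hr')
  · intro a x _ hx r' hr'
    rw [smul_smul]
    exact hx (r' * a) (ip_mul_right I i r' hr' a)


variable {A : Type*} [Ring A] (𝒜 : ℕ → AddSubgroup A) [GradedRing 𝒜]
variable (e : ∀ n : ℕ, ↥(𝒜 n) ≃+ ↥(idealPow I n))
variable (he_mul : ∀ (m n : ℕ) (x : ↥(𝒜 m)) (y : ↥(𝒜 n)),
      ((e (m + n) (⟨(x : A) * (y : A), SetLike.mul_mem_graded x.2 y.2⟩ : ↥(𝒜 (m + n)))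
          : ↥(idealPow I (m + n))) : R) =
        ((e m x : ↥(idealPow I m)) : R) * ((e n y : ↥(idealPow I n)) : R))

/-- Degree-`n` evaluation `A^g → M` sending `v` to `∑ (e n (vⱼ)_n) • uⱼ`. -/
def ψ {g : ℕ} (u : Fin g → M) (n : ℕ) (v : Fin g → A) : M :=
  ∑ j, ((e n (DirectSum.decompose 𝒜 (v j) n) : idealPow I n) : R) • u j

lemma psi_add {g : ℕ} (u : Fin g → M) (n : ℕ) (v w : Fin g → A) :
    ψ I 𝒜 e u n (v + w) = ψ I 𝒜 e u n v + ψ I 𝒜 e u n w := by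
  rw [ψ, ψ, ψ, ← Finset.sum_add_distrib]
  refine Finset.sum_congr rfl fun j _ => ?_
  rw [← add_smul]
  congr 1
  rw [Pi.add_apply, DirectSum.decompose_add, DirectSum.add_apply, map_add,
    Submodule.coe_add]

lemma psi_zero {g : ℕ} (u : Fin g → M) (n : ℕ) : ψ I 𝒜 e u n 0 = 0 := by
  rw [ψ]
  refine Finset.sum_eq_zero fun j _ => ?_
  simp



include he_mul in
lemma psi_homog_smul_of_le {g : ℕ} (u : Fin g → M) (i n' : ℕ) (y : ↥(𝒜 i)) (v : Fin g → A) :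
    ψ I 𝒜 e u (i + n') ((y : A) • v) = ((e i y : idealPow I i) : R) • ψ I 𝒜 e u n' v := by
  rw [ψ, ψ, Finset.smul_sum]
  refine Finset.sum_congr rfl fun j _ => ?_
  have hvj : ((y : A) • v) j = (y : A) * v j := rfl
  have key : DirectSum.decompose 𝒜 ((y : A) * v j) (i + n') =
      (⟨(y : A) * ((DirectSum.decompose 𝒜 (v j) n' : ↥(𝒜 n')) : A),
        SetLike.mul_mem_graded y.2 (DirectSum.decompose 𝒜 (v j) n').2⟩ : ↥(𝒜 (i + n'))) :=
    Subtype.ext (DirectSum.coe_decompose_mul_add_of_left_mem 𝒜 y.2)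
  rw [hvj, key, he_mul i n' y (DirectSum.decompose 𝒜 (v j) n'), mul_smul]

lemma psi_homog_smul_of_not_le {g : ℕ} (u : Fin g → M) {i n : ℕ} (hn : ¬ i ≤ n)
    (y : ↥(𝒜 i)) (v : Fin g → A) :
    ψ I 𝒜 e u n ((y : A) • v) = 0 := by
  rw [ψ]
  refine Finset.sum_eq_zero fun j _ => ?_
  have h0 : DirectSum.decompose 𝒜 (((y : A) • v) j) n = 0 := by
    refine Subtype.ext ?_
    show (DirectSum.decompose 𝒜 ((y : A) * v j) n : A) = 0
    exact DirectSum.coe_decompose_mul_of_left_mem_of_not_le 𝒜 y.2 hn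
  rw [h0, map_zero]
  simp

include he_mul in
lemma psi_mem {g : ℕ} (u : Fin g → M) {x : Fin g → A}
    (hx : x ∈ Submodule.span A {v : Fin g → A | ∃ d ≤ c, ∃ w : Fin g → ↥(𝒜 d),
      (∀ j, v j = ↑(w j)) ∧ (∑ j, ((e d (w j) : idealPow I d) : R) • u j) ∈ T}) :
    ∀ n : ℕ, ψ I 𝒜 e u n x ∈ D I T c n := by
  refine Submodule.span_induction
    (p := fun v _ => ∀ n, ψ I 𝒜 e u n v ∈ D I T c n) ?_ ?_ ?_ ?_ hx
  · rintro v ⟨d, hdc, w, hvw, hT⟩ n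
    by_cases hnd : n = d
    · subst hnd
      have hψ : ψ I 𝒜 e u n v = ∑ j, ((e n (w j) : idealPow I n) : R) • u j := by
        rw [ψ]
        refine Finset.sum_congr rfl fun j _ => ?_
        have : DirectSum.decompose 𝒜 (v j) n = w j :=
          Subtype.ext (by rw [hvw j]; exact DirectSum.decompose_of_mem_same 𝒜 (w j).2)
        rw [this]
      rw [hψ]
      have h1 : (1 : R) ∈ idealPow I (n - c) := by
        have h0 : n - c = 0 := by omega
        rw [h0]
        exact Submodule.mem_top
      exact Submodule.subset_span ⟨1, h1, _, hT, (one_smul R _).symm⟩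
    · have hψ : ψ I 𝒜 e u n v = 0 := by
        rw [ψ]
        refine Finset.sum_eq_zero fun j _ => ?_
        have h0 : DirectSum.decompose 𝒜 (v j) n = 0 := by
          refine Subtype.ext ?_
          show (DirectSum.decompose 𝒜 (v j) n : A) = 0
          rw [hvw j]
          exact DirectSum.decompose_of_mem_ne 𝒜 (w j).2 (fun h => hnd h.symm)
        rw [h0, map_zero]
        simp
      rw [hψ]
      exact zero_mem _
  · intro n; rw [psi_zero]; exact zero_mem _
  · intro v w _ _ hv hw n
    rw [psi_add]
    exact add_mem (hv n) (hw n)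
  · intro a v _ hv
    refine DirectSum.Decomposition.inductionOn 𝒜
      (motive := fun a => ∀ n, ψ I 𝒜 e u n (a • v) ∈ D I T c n) ?_ ?_ ?_ a
    · intro n
      rw [zero_smul, psi_zero]
      exact zero_mem _
    · intro i y n
      by_cases hin : i ≤ n
      · obtain ⟨n', rfl⟩ := Nat.exists_eq_add_of_le hin
        rw [psi_homog_smul_of_le I 𝒜 e he_mul u i n' y v]
        exact smul_D I T c i n' (e i y).2 (hv n')
      · rw [psi_homog_smul_of_not_le I 𝒜 e u hin y v]
        exact zero_mem _
    · intro a b ha hb n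
      rw [add_smul, psi_add]
      exact add_mem (ha n) (hb n)

end Ring

section Graded
variable {A : Type*} [Ring A] (𝒜 : ℕ → AddSubgroup A) [GradedRing 𝒜]

lemma span_homog_graded {g : ℕ} {S : Set (Fin g → A)}
    (hS : ∀ v ∈ S, ∃ d : ℕ, ∀ j, v j ∈ 𝒜 d) :
    ∀ x ∈ Submodule.span A S, ∀ d : ℕ,
      (fun j => (DirectSum.decompose 𝒜 (x j) d : A)) ∈ Submodule.span A S := by
  intro x hx
  refine Submodule.span_induction
    (p := fun v _ => ∀ d : ℕ,
      (fun j => (DirectSum.decompose 𝒜 (v j) d : A)) ∈ Submodule.span A S) ?_ ?_ ?_ ?_ hx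
  · intro v hv d
    obtain ⟨d', hd'⟩ := hS v hv
    by_cases hdd : d = d'
    · subst hdd
      have : (fun j => (DirectSum.decompose 𝒜 (v j) d : A)) = v := by
        funext j
        exact DirectSum.decompose_of_mem_same 𝒜 (hd' j)
      rw [this]
      exact Submodule.subset_span hv
    · have : (fun j => (DirectSum.decompose 𝒜 (v j) d : A)) = 0 := by
        funext j
        exact DirectSum.decompose_of_mem_ne 𝒜 (hd' j) (fun h => hdd h.symm)
      rw [this]
      exact zero_mem _
  · intro d
    have : (fun j => (DirectSum.decompose 𝒜 ((0 : Fin g → A) j) d : A)) = 0 := by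
      funext j; simp
    rw [this]
    exact zero_mem _
  · intro v w _ _ hv hw d
    have : (fun j => (DirectSum.decompose 𝒜 ((v + w) j) d : A)) =
        (fun j => (DirectSum.decompose 𝒜 (v j) d : A)) +
          (fun j => (DirectSum.decompose 𝒜 (w j) d : A)) := by
      funext j
      simp [DirectSum.decompose_add]
    rw [this]
    exact add_mem (hv d) (hw d)
  · intro a v _ hv
    refine DirectSum.Decomposition.inductionOn 𝒜
      (motive := fun a => ∀ d : ℕ,
        (fun j => (DirectSum.decompose 𝒜 ((a • v) j) d : A)) ∈ Submodule.span A S) ?_ ?_ ?_ a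
    · intro d
      have : (fun j => (DirectSum.decompose 𝒜 (((0 : A) • v) j) d : A)) = 0 := by
        funext j; simp
      rw [this]
      exact zero_mem _
    · intro i y d
      by_cases hid : i ≤ d
      · obtain ⟨d', rfl⟩ := Nat.exists_eq_add_of_le hid
        have : (fun j => (DirectSum.decompose 𝒜 (((y : A) • v) j) (i + d') : A)) =
            (y : A) • (fun j => (DirectSum.decompose 𝒜 (v j) d' : A)) := by
          funext j
          show (DirectSum.decompose 𝒜 ((y : A) * v j) (i + d') : A) = _
          rw [DirectSum.coe_decompose_mul_add_of_left_mem 𝒜 y.2]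
          rfl
        rw [this]
        exact Submodule.smul_mem _ _ (hv d')
      · have : (fun j => (DirectSum.decompose 𝒜 (((y : A) • v) j) d : A)) = 0 := by
          funext j
          show (DirectSum.decompose 𝒜 ((y : A) * v j) d : A) = 0
          exact DirectSum.coe_decompose_mul_of_left_mem_of_not_le 𝒜 y.2 hid
        rw [this]
        exact zero_mem _
    · intro a b ha hb d
      have : (fun j => (DirectSum.decompose 𝒜 (((a + b) • v) j) d : A)) =
          (fun j => (DirectSum.decompose 𝒜 ((a • v) j) d : A)) +
            (fun j => (DirectSum.decompose 𝒜 ((b • v) j) d : A)) := by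
        funext j
        have h1 : ((a + b) • v) j = (a • v) j + (b • v) j := add_mul a b (v j)
        rw [h1, DirectSum.decompose_add, DirectSum.add_apply]
        rfl
      rw [this]
      exact add_mem (ha d) (hb d)


lemma graded_fg (hgr : ∀ J : Ideal A, Ideal.IsHomogeneous 𝒜 J → J.FG) :
    ∀ (g : ℕ) (Q : Submodule A (Fin g → A)),
      (∀ x ∈ Q, ∀ d : ℕ, (fun j => (DirectSum.decompose 𝒜 (x j) d : A)) ∈ Q) → Q.FG := by
  intro g
  induction g with
  | zero =>
    intro Q _
    have : Q = ⊥ := Submodule.eq_bot_of_subsingleton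
    rw [this]; exact Submodule.fg_bot
  | succ g ih =>
    intro Q hQ
    let f : (Fin (g + 1) → A) →ₗ[A] A := LinearMap.proj 0
    have hmap : (Q.map f).FG := by
      refine hgr _ ?_
      rintro d r ⟨x, hx, rfl⟩
      exact ⟨_, hQ x hx d, rfl⟩
    let ι : (Fin g → A) →ₗ[A] (Fin (g + 1) → A) :=
      { toFun := fun x => Fin.cons 0 x
        map_add' := by
          intro x y; funext j
          refine Fin.cases ?_ (fun j => ?_) j <;> simp
        map_smul' := by
          intro a x; funext j
          refine Fin.cases ?_ (fun j => ?_) j <;> simp }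
    have hcomap : (Q.comap ι).FG := by
      refine ih _ ?_
      intro x hx d
      have hxQ : (fun j => (DirectSum.decompose 𝒜 ((ι x) j) d : A)) ∈ Q :=
        hQ _ hx d
      have heq : (fun j => (DirectSum.decompose 𝒜 ((ι x) j) d : A)) =
          ι (fun j => (DirectSum.decompose 𝒜 (x j) d : A)) := by
        funext j
        refine Fin.cases ?_ (fun j => ?_) j <;> simp [ι]
      rw [heq] at hxQ
      exact hxQ
    have hinf : Q ⊓ LinearMap.ker f = (Q.comap ι).map ι := by
      ext x
      constructor
      · rintro ⟨hxQ, hxk⟩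
        have hx0 : x 0 = 0 := hxk
        refine ⟨fun j => x j.succ, ?_, ?_⟩
        · show (Fin.cons 0 fun j => x j.succ) ∈ Q
          have : (Fin.cons 0 fun j => x j.succ) = x := by
            funext j
            refine Fin.cases ?_ (fun j => ?_) j <;> simp [hx0]
          rwa [this]
        · show (Fin.cons 0 fun j => x j.succ) = x
          funext j
          refine Fin.cases ?_ (fun j => ?_) j <;> simp [hx0]
      · rintro ⟨y, hy, rfl⟩
        exact ⟨hy, by simp [ι, f]⟩
    exact Submodule.fg_of_fg_map_of_fg_inf_ker f hmap (hinf ▸ hcomap.map ι)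


end Graded

section Tor
variable {R : Type*} [Ring R] (I : Ideal R)
variable (M : Type*) [AddCommGroup M] [Module R M]

/-- The `I`-torsion submodule. -/
def torsionSub : Submodule R M where
  carrier := {m | ∃ n : ℕ, 0 < n ∧ ∀ r ∈ idealPow I n, r • m = 0}
  zero_mem' := ⟨1, one_pos, fun r _ => smul_zero r⟩
  add_mem' := by
    rintro x y ⟨n, hn, hx⟩ ⟨n', hn', hy⟩
    exact ⟨n + n', by omega, fun r hr => by
      rw [smul_add, hx r (ip_antitone I (by omega) hr), hy r (ip_antitone I (by omega) hr),
        add_zero]⟩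
  smul_mem' := by
    rintro c x ⟨n, hn, hx⟩
    exact ⟨n, hn, fun r hr => by
      rw [smul_smul]; exact hx (r * c) (ip_mul_right I n r hr c)⟩

lemma exists_kill [IsNoetherianRing R] [Module.Finite R M] :
    ∃ k : ℕ, 0 < k ∧ ∀ t ∈ torsionSub I M, ∀ r ∈ idealPow I k, r • t = 0 := by
  have hfg : (torsionSub I M).FG := IsNoetherian.noetherian _
  obtain ⟨s, hs⟩ := hfg
  have hmem : ∀ x ∈ s, ∃ n : ℕ, 0 < n ∧ ∀ r ∈ idealPow I n, r • x = 0 := fun x hx =>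
    (hs ▸ Submodule.subset_span hx : x ∈ torsionSub I M)
  choose nf hnf using hmem
  set k := s.attach.sup (fun x => nf x x.2) + 1 with hk
  refine ⟨k, Nat.succ_pos _, ?_⟩
  intro t ht
  rw [← hs] at ht
  refine Submodule.span_induction
    (p := fun t _ => ∀ r ∈ idealPow I k, r • t = 0) ?_ ?_ ?_ ?_ ht
  · intro x hx r hr
    refine (hnf x hx).2 r (ip_antitone I ?_ hr)
    have h2 : nf x hx ≤ s.attach.sup (fun x => nf x x.2) :=
      Finset.le_sup (f := fun x : {x // x ∈ s} => nf x x.2) (Finset.mem_attach s ⟨x, hx⟩)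
    omega
  · intro r _; exact smul_zero r
  · intro a b _ _ ha hb r hr
    rw [smul_add, ha r hr, hb r hr, add_zero]
  · intro cR a _ ha r hr
    rw [smul_smul]
    exact ha (r * cR) (ip_mul_right I _ r hr cR)

lemma pM_rep {M : Type*} [AddCommGroup M] [Module R M] {g : ℕ} (u : Fin g → M)
    (hu : Submodule.span R (Set.range u) = ⊤) (s : ℕ) {m : M}
    (hm : m ∈ Submodule.span R {z : M | ∃ r ∈ idealPow I s, ∃ m' : M, z = r • m'}) :
    ∃ r : Fin g → R, (∀ j, r j ∈ idealPow I s) ∧ m = ∑ j, r j • u j := by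
  refine Submodule.span_induction
    (p := fun z _ => ∃ r : Fin g → R, (∀ j, r j ∈ idealPow I s) ∧ z = ∑ j, r j • u j)
    ?_ ?_ ?_ ?_ hm
  · rintro z ⟨r0, hr0, m', rfl⟩
    have hm' : m' ∈ Submodule.span R (Set.range u) := hu ▸ Submodule.mem_top
    obtain ⟨cvec, hc⟩ := (Submodule.mem_span_range_iff_exists_fun R).mp hm'
    refine ⟨fun j => r0 * cvec j, fun j => ip_mul_right I s r0 hr0 (cvec j), ?_⟩
    rw [← hc, Finset.smul_sum]
    exact Finset.sum_congr rfl fun j _ => smul_smul r0 (cvec j) (u j)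
  · exact ⟨0, fun j => (idealPow I s).zero_mem, by simp⟩
  · rintro z w _ _ ⟨r1, hr1, rfl⟩ ⟨r2, hr2, rfl⟩
    refine ⟨r1 + r2, fun j => (idealPow I s).add_mem (hr1 j) (hr2 j), ?_⟩
    rw [← Finset.sum_add_distrib]
    exact Finset.sum_congr rfl fun j _ => (add_smul (r1 j) (r2 j) (u j)).symm
  · rintro a z _ ⟨r1, hr1, rfl⟩
    refine ⟨fun j => a * r1 j, fun j => ?_, ?_⟩
    · simpa [smul_eq_mul] using (idealPow I s).smul_mem a (hr1 j)
    · rw [Finset.smul_sum]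
      exact Finset.sum_congr rfl fun j _ => smul_smul a (r1 j) (u j)


end Tor

end ReesTorsionAux

open ReesTorsionAux in
/-- Let `R` be a left Noetherian ring, `I` a two-sided ideal, and suppose the
Rees algebra `R* = ⊕_{n≥0} Iⁿ` (given as an abstract graded ring `A` whose graded pieces are
identified with the powers `Iⁿ` compatibly with multiplication) is graded left Noetherian.
Then for every finitely generated left `R`-module `M` there is a submodule `N ⊆ M` — in fact
`N = I^s M` for `s` large — with no nonzero `I`-torsion elements and with `M/N` `I`-torsion. -/
theorem torsionfree_submodule_of_rees_noetherian
    (R : Type*) [Ring R] [IsNoetherianRing R]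
    (I : Ideal R) (hI : ∀ a ∈ I, ∀ r : R, a * r ∈ I)
    (A : Type*) [Ring A] (𝒜 : ℕ → AddSubgroup A) [GradedRing 𝒜]
    (e : ∀ n : ℕ, ↥(𝒜 n) ≃+ ↥(idealPow I n))
    (he_mul : ∀ (m n : ℕ) (x : ↥(𝒜 m)) (y : ↥(𝒜 n)),
      ((e (m + n) (⟨(x : A) * (y : A), SetLike.mul_mem_graded x.2 y.2⟩ : ↥(𝒜 (m + n)))
          : ↥(idealPow I (m + n))) : R) =
        ((e m x : ↥(idealPow I m)) : R) * ((e n y : ↥(idealPow I n)) : R))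
    (hgradedNoeth : ∀ J : Ideal A, Ideal.IsHomogeneous 𝒜 J → J.FG)
    (M : Type*) [AddCommGroup M] [Module R M] [Module.Finite R M] :
    ∃ s : ℕ, ∀ N : Submodule R M,
      N = Submodule.span R {z : M | ∃ r ∈ idealPow I s, ∃ m : M, z = r • m} →
      (∀ m ∈ N, (∃ n : ℕ, 0 < n ∧ ∀ r ∈ idealPow I n, r • m = 0) → m = 0) ∧
      (∀ mq : M ⧸ N, ∃ n : ℕ, 0 < n ∧ ∀ r ∈ idealPow I n, r • mq = 0) := by
  classical
  obtain ⟨g, u, hu⟩ := Module.Finite.exists_fin (R := R) (M := M)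
  obtain ⟨k, hkpos, hkill⟩ := exists_kill I M
  -- the set of homogeneous "relations" of all degrees, and of degrees ≤ c
  have hGssub : ∀ v ∈ {v : Fin g → A | ∃ d : ℕ, ∃ w : Fin g → ↥(𝒜 d),
      (∀ j, v j = ↑(w j)) ∧ (∑ j, ((e d (w j) : idealPow I d) : R) • u j) ∈ torsionSub I M},
      ∃ d : ℕ, ∀ j, v j ∈ 𝒜 d := by
    rintro v ⟨d, w, h1, -⟩
    exact ⟨d, fun j => by rw [h1 j]; exact (w j).2⟩
  have hfg : (Submodule.span A {v : Fin g → A | ∃ d : ℕ, ∃ w : Fin g → ↥(𝒜 d),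
      (∀ j, v j = ↑(w j)) ∧ (∑ j, ((e d (w j) : idealPow I d) : R) • u j) ∈ torsionSub I M}).FG :=
    graded_fg 𝒜 hgradedNoeth g _ (span_homog_graded 𝒜 hGssub)
  have hmono : Monotone (fun c : ℕ => Submodule.span A {v : Fin g → A | ∃ d ≤ c,
      ∃ w : Fin g → ↥(𝒜 d),
      (∀ j, v j = ↑(w j)) ∧ (∑ j, ((e d (w j) : idealPow I d) : R) • u j) ∈ torsionSub I M}) := by
    intro c c' hcc
    refine Submodule.span_mono ?_
    rintro v ⟨d, hd, w, h1, h2⟩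
    exact ⟨d, le_trans hd hcc, w, h1, h2⟩
  have hGseq : {v : Fin g → A | ∃ d : ℕ, ∃ w : Fin g → ↥(𝒜 d),
      (∀ j, v j = ↑(w j)) ∧ (∑ j, ((e d (w j) : idealPow I d) : R) • u j) ∈ torsionSub I M} =
      ⋃ c : ℕ, {v : Fin g → A | ∃ d ≤ c, ∃ w : Fin g → ↥(𝒜 d),
      (∀ j, v j = ↑(w j)) ∧ (∑ j, ((e d (w j) : idealPow I d) : R) • u j) ∈ torsionSub I M} := by
    ext v
    constructor
    · rintro ⟨d, w, h1, h2⟩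
      exact Set.mem_iUnion.mpr ⟨d, d, le_refl d, w, h1, h2⟩
    · intro hv
      obtain ⟨c, d, _, w, h1, h2⟩ := Set.mem_iUnion.mp hv
      exact ⟨d, w, h1, h2⟩
  obtain ⟨F, hF⟩ := hfg
  have hstep : ∀ f ∈ F, ∃ c : ℕ, f ∈ Submodule.span A {v : Fin g → A | ∃ d ≤ c,
      ∃ w : Fin g → ↥(𝒜 d),
      (∀ j, v j = ↑(w j)) ∧ (∑ j, ((e d (w j) : idealPow I d) : R) • u j) ∈ torsionSub I M} := by
    intro f hf
    have hfmem : f ∈ Submodule.span A {v : Fin g → A | ∃ d : ℕ, ∃ w : Fin g → ↥(𝒜 d),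
        (∀ j, v j = ↑(w j)) ∧ (∑ j, ((e d (w j) : idealPow I d) : R) • u j) ∈ torsionSub I M} :=
      hF ▸ Submodule.subset_span hf
    rw [hGseq, Submodule.span_iUnion] at hfmem
    exact (Submodule.mem_iSup_of_directed _ hmono.directed_le).mp hfmem
  choose cf hcf using hstep
  set c : ℕ := F.attach.sup (fun f => cf f f.2) with hc
  have hGsle : Submodule.span A {v : Fin g → A | ∃ d : ℕ, ∃ w : Fin g → ↥(𝒜 d),
      (∀ j, v j = ↑(w j)) ∧ (∑ j, ((e d (w j) : idealPow I d) : R) • u j) ∈ torsionSub I M} ≤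
      Submodule.span A {v : Fin g → A | ∃ d ≤ c, ∃ w : Fin g → ↥(𝒜 d),
      (∀ j, v j = ↑(w j)) ∧ (∑ j, ((e d (w j) : idealPow I d) : R) • u j) ∈ torsionSub I M} := by
    rw [← hF]
    refine Submodule.span_le.mpr ?_
    intro f hf
    have hle : cf f hf ≤ c := Finset.le_sup (f := fun f : {x // x ∈ F} => cf f f.2)
      (Finset.mem_attach F ⟨f, hf⟩)
    exact hmono hle (hcf f hf)
  refine ⟨c + k, fun N hN => ?_⟩
  constructor
  · -- N contains no nonzero torsion element
    intro m hmN htor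
    have hmT : m ∈ torsionSub I M := htor
    have hmp : m ∈ Submodule.span R {z : M | ∃ r ∈ idealPow I (c + k), ∃ m' : M, z = r • m'} :=
      hN ▸ hmN
    obtain ⟨r, hr, hm⟩ := pM_rep I u hu (c + k) hmp
    have hsum : (∑ j, ((e (c + k) ((e (c + k)).symm ⟨r j, hr j⟩) : idealPow I (c + k)) : R) • u j)
        = m := by
      rw [hm]
      refine Finset.sum_congr rfl fun j _ => ?_
      rw [AddEquiv.apply_symm_apply]
    have hvG : (fun j => (((e (c + k)).symm ⟨r j, hr j⟩ : ↥(𝒜 (c + k))) : A)) ∈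
        {v : Fin g → A | ∃ d : ℕ, ∃ w : Fin g → ↥(𝒜 d),
        (∀ j, v j = ↑(w j)) ∧ (∑ j, ((e d (w j) : idealPow I d) : R) • u j) ∈ torsionSub I M} :=
      ⟨c + k, fun j => (e (c + k)).symm ⟨r j, hr j⟩, fun j => rfl, hsum ▸ hmT⟩
    have hv := hGsle (Submodule.subset_span hvG)
    have hpsi := psi_mem I (torsionSub I M) c 𝒜 e he_mul u hv (c + k)
    have hψv : ψ I 𝒜 e u (c + k)
        (fun j => (((e (c + k)).symm ⟨r j, hr j⟩ : ↥(𝒜 (c + k))) : A)) = m := by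
      rw [ψ, ← hsum]
      refine Finset.sum_congr rfl fun j _ => ?_
      have hd : DirectSum.decompose 𝒜
          ((((e (c + k)).symm ⟨r j, hr j⟩ : ↥(𝒜 (c + k))) : A)) (c + k) =
          (e (c + k)).symm ⟨r j, hr j⟩ :=
        Subtype.ext (DirectSum.decompose_of_mem_same 𝒜 ((e (c + k)).symm ⟨r j, hr j⟩).2)
      rw [hd]
    have hD : D I (torsionSub I M) c (c + k) ≤ ⊥ := by
      refine Submodule.span_le.mpr ?_
      rintro z ⟨r', hr', t, ht, rfl⟩
      have hck : c + k - c = k := by omega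
      rw [hck] at hr'
      simp [hkill t ht r' hr']
    have := hD (hψv ▸ hpsi)
    simpa using this
  · -- `M/N` is `I`-torsion
    intro mq
    refine ⟨c + k, by omega, ?_⟩
    obtain ⟨m, rfl⟩ := Submodule.Quotient.mk_surjective N mq
    intro r hr
    rw [← Submodule.Quotient.mk_smul, Submodule.Quotient.mk_eq_zero]
    exact hN ▸ Submodule.subset_span ⟨r, hr, m, rfl⟩
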